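/- Let g₀ > 0 be small, a > 0, and suppose a(s) = a + λ r(s) with |r(s)| ≤ C and λ > 0 small. Define I_n = ∫₀ⁿ ds · g₀ / (1 + g₀ ∫₀ˢ a(t) dt). Then |I_n − (1/a)·log(1 + a g₀ n)| ≤ (4Cλ/a²)·log(1 + a g₀ n) for all n ≥ 1 (assuming 2Cλ ≤ a/2 so that a(s) ≥ a/2). -/

import Mathlib

open Real MeasureTheory intervalIntegral

theorem stmt_4 (a C lam g₀ : ℝ) (ha : 0 < a) (hC : 0 < C) (hlam : 0 < lam) (hg₀ : 0 < g₀)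
    (hsmall : 2 * C * lam ≤ a / 2)
    (r : ℝ → ℝ) (hr : Measurable r) (hrC : ∀ s, |r s| ≤ C)
    (n : ℕ) (hn : 1 ≤ n) :
    |(∫ s in (0:ℝ)..(n:ℝ), g₀ / (1 + g₀ * ∫ t in (0:ℝ)..s, (a + lam * r t))) -
        (1 / a) * Real.log (1 + a * g₀ * n)| ≤
      (4 * C * lam / a ^ 2) * Real.log (1 + a * g₀ * n) := by
  have hn0 : (0:ℝ) < n := by exact_mod_cast Nat.lt_of_lt_of_le Nat.zero_lt_one hn
  have hn0' : (0:ℝ) ≤ n := hn0.le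
  have hCl : C * lam ≤ a / 4 := by nlinarith
  have hag : 0 ≤ a * g₀ := (mul_pos ha hg₀).le
  -- integrability of r on intervals
  have hrInt : ∀ x y : ℝ, IntervalIntegrable r volume x y := fun x y =>
    (_root_.intervalIntegrable_const (c := C)).mono_fun hr.aestronglyMeasurable.restrict
      (Filter.Eventually.of_forall fun t => by
        simp only [Real.norm_eq_abs]
        exact (hrC t).trans (le_abs_self C))
  have hInt : ∀ x y : ℝ, IntervalIntegrable (fun t => a + lam * r t) volume x y := fun x y =>
    (_root_.intervalIntegrable_const (c := a)).add ((hrInt x y).const_mul lam)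
  set A : ℝ → ℝ := fun s => ∫ t in (0:ℝ)..s, (a + lam * r t) with hA
  have hAcont : Continuous A := intervalIntegral.continuous_primitive (fun x y => hInt x y) 0
  have hAbound : ∀ s : ℝ, 0 ≤ s → |A s - a * s| ≤ C * lam * s := by
    intro s hs
    have h1 : A s = a * s + lam * ∫ t in (0:ℝ)..s, r t := by
      rw [hA]
      simp only
      rw [intervalIntegral.integral_add (_root_.intervalIntegrable_const)
        ((hrInt 0 s).const_mul lam),
        intervalIntegral.integral_const, intervalIntegral.integral_const_mul, smul_eq_mul]
      ring
    have h2 : |∫ t in (0:ℝ)..s, r t| ≤ C * s := by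
      have := intervalIntegral.norm_integral_le_of_norm_le_const (a := 0) (b := s)
        (C := C) (f := r) (fun x _ => by simpa using hrC x)
      simpa [abs_of_nonneg hs] using this
    calc |A s - a * s| = lam * |∫ t in (0:ℝ)..s, r t| := by
          rw [h1]; rw [show a * s + lam * (∫ t in (0:ℝ)..s, r t) - a * s
            = lam * ∫ t in (0:ℝ)..s, r t by ring, abs_mul, abs_of_pos hlam]
      _ ≤ lam * (C * s) := mul_le_mul_of_nonneg_left h2 hlam.le
      _ = C * lam * s := by ring
  have hAlow : ∀ s : ℝ, 0 ≤ s → a / 2 * s ≤ A s := by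
    intro s hs
    have h := abs_le.1 (hAbound s hs)
    nlinarith [h.1, mul_le_mul_of_nonneg_right hCl hs]
  -- the comparison function g
  have hgcont : ContinuousOn (fun s => g₀ / (1 + a * g₀ * s)) (Set.uIcc (0:ℝ) (n:ℝ)) := by
    apply ContinuousOn.div continuousOn_const
    · fun_prop
    · intro s hs
      rw [Set.uIcc_of_le hn0'] at hs
      nlinarith [mul_nonneg hag hs.1]
  have hgI : IntervalIntegrable (fun s => g₀ / (1 + a * g₀ * s)) volume 0 n :=
    hgcont.intervalIntegrable
  have hgval : (∫ s in (0:ℝ)..(n:ℝ), g₀ / (1 + a * g₀ * s))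
      = (1 / a) * Real.log (1 + a * g₀ * n) := by
    have hF : ∀ s ∈ Set.uIcc (0:ℝ) (n:ℝ),
        HasDerivAt (fun x => (1 / a) * Real.log (1 + a * g₀ * x)) (g₀ / (1 + a * g₀ * s)) s := by
      intro s hs
      rw [Set.uIcc_of_le hn0'] at hs
      have hden : (0:ℝ) < 1 + a * g₀ * s := by nlinarith [mul_nonneg hag hs.1]
      have h1 : HasDerivAt (fun x : ℝ => 1 + a * g₀ * x) (a * g₀) s := by
        simpa using ((hasDerivAt_id s).const_mul (a * g₀)).const_add 1
      have h2 := (h1.log hden.ne').const_mul (1 / a)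
      convert h2 using 1
      case e'_9 => rw [one_div, ← mul_div_assoc, ← mul_assoc, inv_mul_cancel₀ ha.ne', one_mul]
      all_goals rfl
    rw [intervalIntegral.integral_eq_sub_of_hasDerivAt hF hgI]
    simp
  -- integrability of f
  have hfcont : ContinuousOn (fun s => g₀ / (1 + g₀ * A s)) (Set.uIcc (0:ℝ) (n:ℝ)) := by
    apply ContinuousOn.div continuousOn_const
    · exact (continuous_const.add (continuous_const.mul hAcont)).continuousOn
    · intro s hs
      rw [Set.uIcc_of_le hn0'] at hs
      have h1 := hAlow s hs.1
      have h2 : 0 ≤ a / 2 * s := mul_nonneg (by linarith) hs.1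
      nlinarith [mul_le_mul_of_nonneg_left h1 hg₀.le, mul_nonneg hg₀.le h2]
  have hfI : IntervalIntegrable (fun s => g₀ / (1 + g₀ * A s)) volume 0 n :=
    hfcont.intervalIntegrable
  -- the dominating function
  have hhI : IntervalIntegrable (fun s => 2 * C * lam / a * (g₀ / (1 + a * g₀ * s)))
      volume 0 n := hgI.const_mul _
  have hhval : (∫ s in (0:ℝ)..(n:ℝ), 2 * C * lam / a * (g₀ / (1 + a * g₀ * s)))
      = 2 * C * lam / a * ((1 / a) * Real.log (1 + a * g₀ * n)) := by
    rw [intervalIntegral.integral_const_mul, hgval]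
  have hLpos : 0 ≤ Real.log (1 + a * g₀ * n) :=
    Real.log_nonneg (by nlinarith [mul_nonneg hag hn0'])
  -- main estimate
  have key : |(∫ s in (0:ℝ)..(n:ℝ), g₀ / (1 + g₀ * A s)) -
      (1 / a) * Real.log (1 + a * g₀ * n)| ≤
      2 * C * lam / a * ((1 / a) * Real.log (1 + a * g₀ * n)) := by
    rw [← hgval, ← intervalIntegral.integral_sub hfI hgI]
    have hbound : ∀ᵐ t ∂(volume.restrict (Set.uIoc (0:ℝ) (n:ℝ))),
        ‖g₀ / (1 + g₀ * A t) - g₀ / (1 + a * g₀ * t)‖ ≤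
          2 * C * lam / a * (g₀ / (1 + a * g₀ * t)) := by
      refine (ae_restrict_mem measurableSet_uIoc).mono fun t ht => ?_
      rw [Set.uIoc_of_le hn0'] at ht
      obtain ⟨ht0, htn⟩ := ht
      have hAt := hAbound t ht0.le
      have hAl := hAlow t ht0.le
      have hD1 : (0:ℝ) < 1 + g₀ * A t := by
        have h2 : 0 ≤ a / 2 * t := mul_nonneg (by linarith) ht0.le
        nlinarith [mul_le_mul_of_nonneg_left hAl hg₀.le, mul_nonneg hg₀.le h2]
      have hD2 : (0:ℝ) < 1 + a * g₀ * t := by nlinarith [mul_nonneg hag ht0.le]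
      have hDD : (0:ℝ) < (1 + g₀ * A t) * (1 + a * g₀ * t) := mul_pos hD1 hD2
      rw [Real.norm_eq_abs, div_sub_div _ _ hD1.ne' hD2.ne', abs_div, abs_of_pos hDD]
      have hnum : |g₀ * (1 + a * g₀ * t) - (1 + g₀ * A t) * g₀| ≤ g₀ ^ 2 * (C * lam * t) := by
        rw [show g₀ * (1 + a * g₀ * t) - (1 + g₀ * A t) * g₀
            = g₀ ^ 2 * (a * t - A t) by ring, abs_mul, abs_of_pos (pow_pos hg₀ 2),
          abs_sub_comm]
        exact mul_le_mul_of_nonneg_left hAt (pow_pos hg₀ 2).le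
      refine ((div_le_div_iff_of_pos_right hDD).2 hnum).trans ?_
      have hkey : g₀ * t / (1 + g₀ * A t) ≤ 2 / a := by
        rw [div_le_div_iff₀ hD1 ha]
        nlinarith [mul_le_mul_of_nonneg_left hAl hg₀.le]
      have heq : g₀ ^ 2 * (C * lam * t) / ((1 + g₀ * A t) * (1 + a * g₀ * t))
          = (C * lam * (g₀ * t / (1 + g₀ * A t))) * (g₀ / (1 + a * g₀ * t)) := by
        field_simp
      rw [heq]
      refine mul_le_mul_of_nonneg_right ?_ (div_nonneg hg₀.le hD2.le)
      calc C * lam * (g₀ * t / (1 + g₀ * A t)) ≤ C * lam * (2 / a) :=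
            mul_le_mul_of_nonneg_left hkey (mul_pos hC hlam).le
        _ = 2 * C * lam / a := by ring
    have h := intervalIntegral.norm_integral_le_abs_of_norm_le hbound hhI
    rw [Real.norm_eq_abs] at h
    refine h.trans ?_
    rw [hhval, hgval]
    refine le_of_eq (abs_of_nonneg ?_)
    have h1 : (0:ℝ) ≤ 2 * C * lam / a := by positivity
    have h2 : (0:ℝ) ≤ 1 / a := by positivity
    exact mul_nonneg h1 (mul_nonneg h2 hLpos)
  refine key.trans ?_
  rw [show 2 * C * lam / a * ((1 / a) * Real.log (1 + a * g₀ * n))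
      = (2 * C * lam / a ^ 2) * Real.log (1 + a * g₀ * n) by ring]
  apply mul_le_mul_of_nonneg_right _ hLpos
  exact (div_le_div_iff_of_pos_right (pow_pos ha 2)).2 (by nlinarith)
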